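/- The complete graph K_n has an edge-disjoint triangle decomposition (i.e., ν_t(K_n) = |E(K_n)|/3) if and only if n ≡ 1 or 3 (mod 6). -/
import Mathlib

set_option linter.unusedSectionVars false

/-- `t` is (the vertex set of) a triangle of `G`. -/
def IsTriangle {V : Type*} (G : SimpleGraph V) (t : Finset V) : Prop :=
  t.card = 3 ∧ ∀ x ∈ t, ∀ y ∈ t, x ≠ y → G.Adj x y

/-- The set of (three) edges of the triangle with vertex set `t`. -/
def triEdges {V : Type*} [DecidableEq V] (t : Finset V) : Finset (Sym2 V) :=
  ((t ×ˢ t).filter fun p => p.1 ≠ p.2).image fun p => s(p.1, p.2)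

/-- A triangle cover of `G`: a set of edges of `G` intersecting (the edge set of)
every triangle of `G`. -/
def IsTriangleCover {V : Type*} [DecidableEq V] (G : SimpleGraph V)
    (C : Finset (Sym2 V)) : Prop :=
  (∀ e ∈ C, e ∈ G.edgeSet) ∧
    ∀ t : Finset V, IsTriangle G t → ∃ e ∈ triEdges t, e ∈ C

/-- A triangle packing of `G`: a set of pairwise edge-disjoint triangles. -/
def IsTrianglePacking {V : Type*} [DecidableEq V] (G : SimpleGraph V)
    (P : Finset (Finset V)) : Prop :=
  (∀ t ∈ P, IsTriangle G t) ∧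
    ∀ t₁ ∈ P, ∀ t₂ ∈ P, t₁ ≠ t₂ → Disjoint (triEdges t₁) (triEdges t₂)

/-- The triangle covering number τ_t(G). -/
noncomputable def tauT {V : Type*} [DecidableEq V] (G : SimpleGraph V) : ℕ :=
  sInf {n | ∃ C : Finset (Sym2 V), IsTriangleCover G C ∧ C.card = n}

/-- The triangle packing number ν_t(G). -/
noncomputable def nuT {V : Type*} [DecidableEq V] (G : SimpleGraph V) : ℕ :=
  sSup {n | ∃ P : Finset (Finset V), IsTrianglePacking G P ∧ P.card = n}

/-- The number of triangles of `G`, i.e. |T_G|. -/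
noncomputable def numTris {V : Type*} (G : SimpleGraph V) : ℕ :=
  Set.ncard {t : Finset V | IsTriangle G t}

/-- The number of edges of `G`. -/
noncomputable def numEdges {V : Type*} (G : SimpleGraph V) : ℕ :=
  Set.ncard G.edgeSet

/-! ### Core counting lemmas -/

section Core
variable {V : Type*} [DecidableEq V]

lemma mem_triEdges {t : Finset V} {e : Sym2 V} :
    e ∈ triEdges t ↔ ∃ x ∈ t, ∃ y ∈ t, x ≠ y ∧ e = s(x, y) := by
  simp only [triEdges, Finset.mem_image, Finset.mem_filter, Finset.mem_product, Prod.exists]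
  constructor
  · rintro ⟨a, b, ⟨⟨ha, hb⟩, hab⟩, rfl⟩; exact ⟨a, ha, b, hb, hab, rfl⟩
  · rintro ⟨a, ha, b, hb, hab, rfl⟩; exact ⟨a, b, ⟨⟨ha, hb⟩, hab⟩, rfl⟩

lemma triEdges_tripleton {a b c : V} (hab : a ≠ b) (hac : a ≠ c) (hbc : b ≠ c) :
    triEdges ({a, b, c} : Finset V) = {s(a,b), s(a,c), s(b,c)} := by
  ext e
  simp only [mem_triEdges, Finset.mem_insert, Finset.mem_singleton]
  constructor
  · rintro ⟨x, hx, y, hy, hxy, rfl⟩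
    rcases hx with rfl|rfl|rfl <;> rcases hy with rfl|rfl|rfl <;>
      simp_all [Sym2.eq_swap]
  · rintro (rfl|rfl|rfl)
    · exact ⟨a, by simp, b, by simp, hab, rfl⟩
    · exact ⟨a, by simp, c, by simp, hac, rfl⟩
    · exact ⟨b, by simp, c, by simp, hbc, rfl⟩

lemma card_triEdges {t : Finset V} (ht : t.card = 3) : (triEdges t).card = 3 := by
  obtain ⟨a, b, c, hab, hac, hbc, rfl⟩ := Finset.card_eq_three.mp ht
  rw [triEdges_tripleton hab hac hbc]
  rw [Finset.card_insert_of_notMem, Finset.card_insert_of_notMem, Finset.card_singleton]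
  · simp only [Finset.mem_singleton, Sym2.eq_iff]; tauto
  · simp only [Finset.mem_insert, Finset.mem_singleton, Sym2.eq_iff]; tauto

lemma triEdges_subset_edgeFinset [Fintype V] {G : SimpleGraph V} [DecidableRel G.Adj]
    {t : Finset V} (ht : IsTriangle G t) : triEdges t ⊆ G.edgeFinset := by
  intro e he
  obtain ⟨x, hx, y, hy, hxy, rfl⟩ := mem_triEdges.mp he
  rw [SimpleGraph.mem_edgeFinset, SimpleGraph.mem_edgeSet]
  exact ht.2 x hx y hy hxy

variable [Fintype V]

lemma numEdges_eq_card {G : SimpleGraph V} [DecidableRel G.Adj] :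
    numEdges G = G.edgeFinset.card := by
  rw [numEdges, ← SimpleGraph.coe_edgeFinset, Set.ncard_coe_finset]

lemma packing_card_biUnion {G : SimpleGraph V} {P : Finset (Finset V)}
    (hP : IsTrianglePacking G P) : (P.biUnion triEdges).card = 3 * P.card := by
  rw [Finset.card_biUnion (fun t₁ h₁ t₂ h₂ h => hP.2 t₁ h₁ t₂ h₂ h)]
  rw [Finset.sum_congr rfl fun t ht => card_triEdges (hP.1 t ht).1]
  simp [mul_comm]

lemma packing_le {G : SimpleGraph V} [DecidableRel G.Adj] {P : Finset (Finset V)}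
    (hP : IsTrianglePacking G P) : 3 * P.card ≤ numEdges G := by
  rw [numEdges_eq_card, ← packing_card_biUnion hP]
  exact Finset.card_le_card (Finset.biUnion_subset.mpr
    fun t ht => triEdges_subset_edgeFinset (hP.1 t ht))

lemma packingSet_bddAbove (G : SimpleGraph V) [DecidableRel G.Adj] :
    BddAbove {n | ∃ P : Finset (Finset V), IsTrianglePacking G P ∧ P.card = n} := by
  refine ⟨numEdges G, ?_⟩
  rintro m ⟨P, hP, rfl⟩
  have := packing_le hP
  omega

lemma packingSet_nonempty (G : SimpleGraph V) :
    {n | ∃ P : Finset (Finset V), IsTrianglePacking G P ∧ P.card = n}.Nonempty :=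
  ⟨0, ∅, ⟨by simp, by simp⟩, rfl⟩

lemma exists_max_packing (G : SimpleGraph V) [DecidableRel G.Adj] :
    ∃ P : Finset (Finset V), IsTrianglePacking G P ∧ P.card = nuT G :=
  Nat.sSup_mem (packingSet_nonempty G) (packingSet_bddAbove G)

lemma le_nuT {G : SimpleGraph V} [DecidableRel G.Adj] {P : Finset (Finset V)}
    (hP : IsTrianglePacking G P) : P.card ≤ nuT G :=
  le_csSup (packingSet_bddAbove G) ⟨P, hP, rfl⟩

end Core

/-! ### From a Steiner quasigroup to a triangle decomposition -/

section QuasiGroup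
variable {V : Type*} [DecidableEq V] [Fintype V]
variable (op : V → V → V)
variable (hc : ∀ x y, op x y = op y x) (hi : ∀ x, op x x = x)
variable (hk : ∀ x y, op x (op x y) = y)

def block (x y : V) : Finset V := {x, y, op x y}

lemma mem_block_left (x y : V) : x ∈ block op x y := by simp [block]
lemma mem_block_right (x y : V) : y ∈ block op x y := by simp [block]

include hc hi hk

lemma op_ne_left {x y : V} (h : x ≠ y) : op x y ≠ x := by
  intro he
  have := hk x y
  rw [he, hi] at this
  exact h this

lemma op_ne_right {x y : V} (h : x ≠ y) : op x y ≠ y := by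
  rw [hc]; exact op_ne_left op hc hi hk (Ne.symm h)

lemma block_card {x y : V} (h : x ≠ y) : (block op x y).card = 3 := by
  rw [block, Finset.card_insert_of_notMem, Finset.card_insert_of_notMem,
    Finset.card_singleton]
  · simpa using (op_ne_right op hc hi hk h).symm
  · simp only [Finset.mem_insert, Finset.mem_singleton]
    push_neg
    exact ⟨h, (op_ne_left op hc hi hk h).symm⟩

lemma block_unique {a b x y : V} (hab : a ≠ b) (hxy : x ≠ y)
    (hx : x ∈ block op a b) (hy : y ∈ block op a b) :
    block op a b = block op x y := by
  have hba : op b a = op a b := hc b a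
  have hac : op a (op a b) = b := hk a b
  have hca : op (op a b) a = b := by rw [hc]; exact hac
  have hbc : op b (op a b) = a := by rw [hc a b]; exact hk b a
  have hcb : op (op a b) b = a := by rw [hc]; exact hbc
  simp only [block, Finset.mem_insert, Finset.mem_singleton] at hx hy
  unfold block
  rcases hx with rfl|rfl|rfl <;> rcases hy with rfl|rfl|rfl <;>
    first
      | exact absurd rfl hxy
      | (simp only [hba, hac, hca, hbc, hcb]
         try (ext z; simp only [Finset.mem_insert, Finset.mem_singleton]; tauto))

def blockSet : Finset (Finset V) :=
  (Finset.univ.offDiag).image fun p : V × V => block op p.1 p.2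

omit hc hi hk in
lemma mem_blockSet {t : Finset V} :
    t ∈ blockSet op ↔ ∃ a b : V, a ≠ b ∧ t = block op a b := by
  simp only [blockSet, Finset.mem_image, Finset.mem_offDiag, Prod.exists]
  constructor
  · rintro ⟨a, b, ⟨-, -, hab⟩, rfl⟩; exact ⟨a, b, hab, rfl⟩
  · rintro ⟨a, b, hab, rfl⟩; exact ⟨a, b, ⟨Finset.mem_univ _, Finset.mem_univ _, hab⟩, rfl⟩

lemma blockSet_packing : IsTrianglePacking (⊤ : SimpleGraph V) (blockSet op) := by
  constructor
  · intro t ht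
    obtain ⟨a, b, hab, rfl⟩ := (mem_blockSet op).mp ht
    exact ⟨block_card op hc hi hk hab, fun x _ y _ hxy => by simpa using hxy⟩
  · intro t₁ h₁ t₂ h₂ hne
    obtain ⟨a, b, hab, rfl⟩ := (mem_blockSet op).mp h₁
    obtain ⟨a', b', hab', rfl⟩ := (mem_blockSet op).mp h₂
    rw [Finset.disjoint_left]
    intro e he₁ he₂
    obtain ⟨x, hx, y, hy, hxy, rfl⟩ := mem_triEdges.mp he₁
    obtain ⟨x', hx', y', hy', hxy', hee⟩ := mem_triEdges.mp he₂
    have hx2 : x ∈ block op a' b' := by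
      rcases Sym2.eq_iff.mp hee with ⟨rfl, rfl⟩ | ⟨rfl, rfl⟩ <;> assumption
    have hy2 : y ∈ block op a' b' := by
      rcases Sym2.eq_iff.mp hee with ⟨rfl, rfl⟩ | ⟨rfl, rfl⟩ <;> assumption
    exact hne ((block_unique op hc hi hk hab hxy hx hy).trans
      (block_unique op hc hi hk hab' hxy hx2 hy2).symm)

lemma blockSet_cover :
    (⊤ : SimpleGraph V).edgeFinset = (blockSet op).biUnion triEdges := by
  ext e
  induction e with
  | _ x y =>
    simp only [SimpleGraph.mem_edgeFinset, SimpleGraph.mem_edgeSet, SimpleGraph.top_adj,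
      Finset.mem_biUnion]
    constructor
    · intro hxy
      refine ⟨block op x y, (mem_blockSet op).mpr ⟨x, y, hxy, rfl⟩, ?_⟩
      exact mem_triEdges.mpr ⟨x, mem_block_left op x y, y, mem_block_right op x y, hxy, rfl⟩
    · rintro ⟨t, -, he⟩
      obtain ⟨a, ha, b, hb, hab, hee⟩ := mem_triEdges.mp he
      rcases Sym2.eq_iff.mp hee with ⟨rfl, rfl⟩ | ⟨rfl, rfl⟩
      · exact hab
      · exact hab.symm

lemma quasigroup_decomposition :
    3 * nuT (⊤ : SimpleGraph V) = numEdges (⊤ : SimpleGraph V) := by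
  have hpack := blockSet_packing op hc hi hk
  have hcount : 3 * (blockSet op).card = numEdges (⊤ : SimpleGraph V) := by
    rw [numEdges_eq_card, blockSet_cover op hc hi hk, packing_card_biUnion hpack]
  have h1 : (blockSet op).card ≤ nuT (⊤ : SimpleGraph V) := le_nuT hpack
  have h2 : 3 * nuT (⊤ : SimpleGraph V) ≤ numEdges (⊤ : SimpleGraph V) := by
    obtain ⟨P, hP, hPc⟩ := exists_max_packing (⊤ : SimpleGraph V)
    rw [← hPc]
    exact packing_le hP
  omega

end QuasiGroup

/-! ### Transport along an equivalence -/

lemma quasigroup_decomposition_fin (n : ℕ) {T : Type*} [Fintype T] [DecidableEq T]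
    (e : T ≃ Fin n) (op : T → T → T)
    (hc : ∀ x y, op x y = op y x) (hi : ∀ x, op x x = x)
    (hk : ∀ x y, op x (op x y) = y) :
    3 * nuT (⊤ : SimpleGraph (Fin n)) = numEdges (⊤ : SimpleGraph (Fin n)) := by
  refine quasigroup_decomposition (fun a b => e (op (e.symm a) (e.symm b))) ?_ ?_ ?_
  · intro x y; exact congrArg e (hc (e.symm x) (e.symm y))
  · intro x; simp [hi]
  · intro x y; simp [hk]

/-! ### Necessity -/

lemma card_filter_mem_triEdges {V : Type*} [DecidableEq V] (v : V) {t : Finset V}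
    (ht : t.card = 3) :
    ((triEdges t).filter (fun e => v ∈ e)).card = if v ∈ t then 2 else 0 := by
  by_cases hv : v ∈ t
  · rw [if_pos hv]
    have himg : (triEdges t).filter (fun e => v ∈ e)
        = (t.erase v).image (fun w => s(v, w)) := by
      ext e
      simp only [Finset.mem_filter, mem_triEdges, Finset.mem_image, Finset.mem_erase]
      constructor
      · rintro ⟨⟨x, hx, y, hy, hxy, rfl⟩, hve⟩
        rcases Sym2.mem_iff.mp hve with rfl | rfl
        · exact ⟨y, ⟨hxy.symm, hy⟩, rfl⟩
        · exact ⟨x, ⟨hxy, hx⟩, Sym2.eq_swap.symm⟩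
      · rintro ⟨w, ⟨hwv, hw⟩, rfl⟩
        exact ⟨⟨v, hv, w, hw, Ne.symm hwv, rfl⟩, by simp⟩
    rw [himg, Finset.card_image_of_injOn, Finset.card_erase_of_mem hv, ht]
    intro a _ b _ hab
    exact Sym2.congr_right.mp hab
  · rw [if_neg hv, Finset.card_eq_zero, Finset.filter_eq_empty_iff]
    intro e he
    obtain ⟨x, hx, y, hy, hxy, rfl⟩ := mem_triEdges.mp he
    intro hve
    rcases Sym2.mem_iff.mp hve with rfl | rfl
    · exact hv hx
    · exact hv hy

lemma necessity (n : ℕ) (hn : 1 ≤ n)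
    (h : 3 * nuT (⊤ : SimpleGraph (Fin n)) = numEdges (⊤ : SimpleGraph (Fin n))) :
    n % 6 = 1 ∨ n % 6 = 3 := by
  obtain ⟨P, hP, hPc⟩ := exists_max_packing (⊤ : SimpleGraph (Fin n))
  have hedges : numEdges (⊤ : SimpleGraph (Fin n)) = n * (n - 1) / 2 := by
    rw [numEdges_eq_card, SimpleGraph.card_edgeFinset_top_eq_card_choose_two,
      Fintype.card_fin, Nat.choose_two_right]
  have hU : P.biUnion triEdges = (⊤ : SimpleGraph (Fin n)).edgeFinset := by
    apply Finset.eq_of_subset_of_card_le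
    · exact Finset.biUnion_subset.mpr fun t ht => triEdges_subset_edgeFinset (hP.1 t ht)
    · rw [packing_card_biUnion hP, hPc, ← numEdges_eq_card]; omega
  set v : Fin n := ⟨0, hn⟩ with hv
  have hdeg : ((⊤ : SimpleGraph (Fin n)).edgeFinset.filter (fun e => v ∈ e)).card = n - 1 := by
    rw [← SimpleGraph.incidenceFinset_eq_filter, SimpleGraph.card_incidenceFinset_eq_degree,
      SimpleGraph.complete_graph_degree, Fintype.card_fin]
  rw [← hU, Finset.filter_biUnion, Finset.card_biUnion (fun t₁ h₁ t₂ h₂ hne =>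
      Finset.disjoint_filter_filter (hP.2 t₁ h₁ t₂ h₂ hne))] at hdeg
  rw [Finset.sum_congr rfl (fun t ht => card_filter_mem_triEdges v (hP.1 t ht).1),
    ← Finset.sum_filter, Finset.sum_const, smul_eq_mul] at hdeg
  -- n - 1 is even
  have hodd : n % 2 = 1 := by omega
  -- 3 divides the number of edges
  have h3 : 3 ∣ n * (n - 1) / 2 := ⟨nuT (⊤ : SimpleGraph (Fin n)), by omega⟩
  have heven : 2 ∣ n * (n - 1) := by
    obtain ⟨m, rfl⟩ : ∃ m, n = m + 1 := ⟨n - 1, by omega⟩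
    simpa [mul_comm] using (Nat.even_mul_succ_self m).two_dvd
  have h3' : 3 ∣ n * (n - 1) := by
    rcases h3 with ⟨c, hc3⟩
    exact ⟨2 * c, by omega⟩
  rcases (Nat.Prime.dvd_mul (by norm_num)).mp h3' with h | h <;> omega

section Bose
variable (k : ℕ)

def boseOp (p q : ZMod (2*k+1) × ZMod 3) : ZMod (2*k+1) × ZMod 3 :=
  if p.1 = q.1 then (p.1, -(p.2 + q.2))
  else if p.2 = q.2 then (((k : ZMod (2*k+1)) + 1) * (p.1 + q.1), p.2 + 1)
  else if q.2 = p.2 + 1 then (2 * q.1 - p.1, p.2)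
  else (2 * p.1 - q.1, q.2)

lemma boseOp_mk (x y : ZMod (2*k+1)) (i j : ZMod 3) :
    boseOp k (x, i) (y, j) =
      if x = y then (x, -(i+j))
      else if i = j then (((k : ZMod (2*k+1)) + 1) * (x + y), i + 1)
      else if j = i + 1 then (2 * y - x, i)
      else (2 * x - y, j) := rfl

lemma bose_two_inv : (2 : ZMod (2*k+1)) * ((k : ZMod (2*k+1)) + 1) = 1 := by
  have h : ((2 * (k+1) : ℕ) : ZMod (2*k+1)) = ((2*k+1 : ℕ) : ZMod (2*k+1)) + 1 := by
    push_cast; ring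
  rw [ZMod.natCast_self] at h
  push_cast at h
  linear_combination h

lemma z3_ne_add_one : ∀ i : ZMod 3, ¬ i = i + 1 := by decide
lemma z3_ne_add_two : ∀ i : ZMod 3, ¬ i = i + 2 := by decide
lemma z3_cases : ∀ i j : ZMod 3, ¬ i = j → ¬ j = i + 1 → i = j + 1 := by decide
lemma z3_neg_double : ∀ i : ZMod 3, -(i + i) = i := by decide

lemma bose_comm (p q : ZMod (2*k+1) × ZMod 3) : boseOp k p q = boseOp k q p := by
  obtain ⟨x, i⟩ := p; obtain ⟨y, j⟩ := q
  rw [boseOp_mk, boseOp_mk]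
  by_cases h1 : x = y
  · subst h1
    rw [if_pos rfl, if_pos rfl]
    exact Prod.ext rfl (by ring)
  · rw [if_neg h1, if_neg (Ne.symm h1)]
    by_cases h2 : i = j
    · subst h2
      rw [if_pos rfl, if_pos rfl]
      exact Prod.ext (by ring) rfl
    · rw [if_neg h2, if_neg (Ne.symm h2)]
      by_cases h3 : j = i + 1
      · have h4 : ¬ i = j + 1 := fun he => z3_ne_add_two i (by linear_combination he + h3)
        rw [if_pos h3, if_neg h4]
      · have h4 : i = j + 1 := z3_cases i j h2 h3
        rw [if_neg h3, if_pos h4]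

lemma bose_idem (p : ZMod (2*k+1) × ZMod 3) : boseOp k p p = p := by
  obtain ⟨x, i⟩ := p
  rw [boseOp_mk, if_pos rfl]
  exact Prod.ext rfl (z3_neg_double i)

lemma bose_key (p q : ZMod (2*k+1) × ZMod 3) : boseOp k p (boseOp k p q) = q := by
  have h2i := bose_two_inv k
  obtain ⟨x, i⟩ := p; obtain ⟨y, j⟩ := q
  by_cases h1 : x = y
  · subst h1
    have hr : boseOp k (x, i) (x, j) = (x, -(i+j)) := by rw [boseOp_mk, if_pos rfl]
    rw [hr, boseOp_mk, if_pos rfl]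
    exact Prod.ext rfl (by ring)
  · by_cases h2 : i = j
    · subst h2
      have hr : boseOp k (x, i) (y, i) = (((k : ZMod (2*k+1)) + 1) * (x + y), i + 1) := by
        rw [boseOp_mk, if_neg h1, if_pos rfl]
      have hne : ¬ x = ((k : ZMod (2*k+1)) + 1) * (x + y) := fun he =>
        h1 (by linear_combination 2*he + (x+y)*h2i)
      rw [hr, boseOp_mk, if_neg hne, if_neg (z3_ne_add_one i), if_pos rfl]
      exact Prod.ext (by linear_combination (x+y)*h2i) rfl
    · by_cases h3 : j = i + 1
      · have hr : boseOp k (x, i) (y, j) = (2 * y - x, i) := by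
          rw [boseOp_mk, if_neg h1, if_neg h2, if_pos h3]
        have hne : ¬ x = 2 * y - x := fun he =>
          h1 (by linear_combination ((k : ZMod (2*k+1))+1)*he + (y - x)*h2i)
        rw [hr, boseOp_mk, if_neg hne, if_pos rfl]
        exact Prod.ext (by linear_combination y*h2i) h3.symm
      · have h4 : i = j + 1 := z3_cases i j h2 h3
        have hr : boseOp k (x, i) (y, j) = (2 * x - y, j) := by
          rw [boseOp_mk, if_neg h1, if_neg h2, if_neg h3]
        have hne : ¬ x = 2 * x - y := fun he => h1 (by linear_combination -he)
        rw [hr, boseOp_mk, if_neg hne, if_neg h2, if_neg h3]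
        exact Prod.ext (by ring) rfl

end Bose
section Skolem
variable (k : ℕ)

instance skNZ (k : ℕ) : NeZero (2*(k+1)) := ⟨by omega⟩

/-- the constant k+1 in ZMod (2(k+1)) -/
def sK : ZMod (2*(k+1)) := ((k+1 : ℕ) : ZMod (2*(k+1)))

def sg (z : ZMod (2*(k+1))) : ZMod (2*(k+1)) :=
  if z.val < k+1 then ((2 * z.val : ℕ) : ZMod (2*(k+1)))
  else ((2 * (z.val - (k+1)) + 1 : ℕ) : ZMod (2*(k+1)))

def sh (s : ZMod (2*(k+1))) : ZMod (2*(k+1)) :=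
  if s.val % 2 = 0 then ((s.val / 2 : ℕ) : ZMod (2*(k+1)))
  else ((k + 1 + s.val / 2 : ℕ) : ZMod (2*(k+1)))

lemma sKK : sK k + sK k = 0 := by
  have h : (((2*(k+1)) : ℕ) : ZMod (2*(k+1))) = 0 := ZMod.natCast_self _
  rw [sK]
  push_cast at h ⊢
  linear_combination h

lemma sval_addK (x : ZMod (2*(k+1))) :
    (x + sK k).val = if x.val < k+1 then x.val + (k+1) else x.val - (k+1) := by
  have hK : (sK k).val = k+1 := ZMod.val_cast_of_lt (by omega)
  have hx := ZMod.val_lt x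
  rw [ZMod.val_add, hK]
  split_ifs with h
  · exact Nat.mod_eq_of_lt (by omega)
  · rw [Nat.mod_eq_sub_mod (by omega)]
    have h2 : x.val + (k+1) - 2*(k+1) = x.val - (k+1) := by omega
    rw [h2, Nat.mod_eq_of_lt (by omega)]

lemma sg_small {z : ZMod (2*(k+1))} (h : z.val < k+1) : sg k z = 2 * z := by
  rw [sg, if_pos h]
  push_cast
  rw [ZMod.natCast_zmod_val]

lemma sg_large {z : ZMod (2*(k+1))} (h : ¬ z.val < k+1) : sg k z = 2 * z + 1 := by
  rw [sg, if_neg h]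
  have hle : (k+1) ≤ z.val := by omega
  push_cast [Nat.cast_sub hle]
  rw [ZMod.natCast_zmod_val]
  have := sKK k
  rw [sK] at this
  push_cast at this
  linear_combination (-2 : ZMod (2*(k+1))) * this + this
  -- 2*(z - (k+1)) + 1 = 2z + 1  needs 2*(k+1 : ZMod) = 0, i.e. this + this? fix below

lemma sh_g (z : ZMod (2*(k+1))) : sh k (sg k z) = z := by
  by_cases h : z.val < k+1
  · rw [sg, if_pos h]
    have hval : ((2*z.val : ℕ) : ZMod (2*(k+1))).val = 2*z.val :=
      ZMod.val_cast_of_lt (by omega)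
    rw [sh, hval, if_pos (by omega)]
    have h2 : 2 * z.val / 2 = z.val := by omega
    rw [h2, ZMod.natCast_zmod_val]
  · have hz := ZMod.val_lt z
    rw [sg, if_neg h]
    have hval : ((2*(z.val-(k+1))+1 : ℕ) : ZMod (2*(k+1))).val = 2*(z.val-(k+1))+1 :=
      ZMod.val_cast_of_lt (by omega)
    rw [sh, hval, if_neg (by omega)]
    have h2 : k + 1 + (2*(z.val-(k+1))+1)/2 = z.val := by omega
    rw [h2, ZMod.natCast_zmod_val]

lemma sg_h (s : ZMod (2*(k+1))) : sg k (sh k s) = s := by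
  have hs := ZMod.val_lt s
  by_cases h : s.val % 2 = 0
  · rw [sh, if_pos h]
    have hval : ((s.val/2 : ℕ) : ZMod (2*(k+1))).val = s.val/2 :=
      ZMod.val_cast_of_lt (by omega)
    rw [sg, hval, if_pos (by omega)]
    have h2 : 2 * (s.val / 2) = s.val := by omega
    rw [h2, ZMod.natCast_zmod_val]
  · rw [sh, if_neg h]
    have hval : ((k+1+s.val/2 : ℕ) : ZMod (2*(k+1))).val = k+1+s.val/2 :=
      ZMod.val_cast_of_lt (by omega)
    rw [sg, hval, if_neg (by omega)]
    have h2 : 2 * ((k+1+s.val/2) - (k+1)) + 1 = s.val := by omega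
    rw [h2, ZMod.natCast_zmod_val]

lemma sh_diag (x : ZMod (2*(k+1))) :
    sh k (x + x) = if x.val < k+1 then x else x + sK k := by
  have hx := ZMod.val_lt x
  have hvv : (x + x).val = (x.val + x.val) % (2*(k+1)) := ZMod.val_add x x
  by_cases h : x.val < k+1
  · rw [if_pos h]
    have hval : (x+x).val = 2*x.val := by
      rw [hvv, Nat.mod_eq_of_lt (by omega)]; omega
    rw [sh, hval, if_pos (by omega)]
    have h2 : 2*x.val/2 = x.val := by omega
    rw [h2, ZMod.natCast_zmod_val]
  · rw [if_neg h]
    have hval : (x+x).val = 2*x.val - 2*(k+1) := by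
      rw [hvv, Nat.mod_eq_sub_mod (by omega), Nat.mod_eq_of_lt (by omega)]; omega
    rw [sh, hval, if_pos (by omega)]
    have h2 : (2*x.val - 2*(k+1))/2 = x.val - (k+1) := by omega
    rw [h2]
    have hle : (k+1) ≤ x.val := by omega
    push_cast [Nat.cast_sub hle]
    rw [ZMod.natCast_zmod_val]
    have hkk := sKK k
    rw [sK] at hkk ⊢
    push_cast at hkk ⊢
    linear_combination -hkk


-- ZMod 3 facts
lemma s3_ne_add_one : ∀ i : ZMod 3, ¬ i = i + 1 := by decide
lemma s3_ne_add_two : ∀ i : ZMod 3, ¬ i = i + 2 := by decide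
lemma s3_ne_sub_one : ∀ i : ZMod 3, ¬ i = i - 1 := by decide
lemma s3_sub_ne_add : ∀ i : ZMod 3, ¬ i - 1 = i + 1 := by decide
lemma s3_add2_ne_add1 : ∀ i : ZMod 3, ¬ i + 2 = i + 1 := by decide
lemma s3_add22 : ∀ i : ZMod 3, i + 2 + 2 = i + 1 := by decide
lemma s3_add12 : ∀ j : ZMod 3, j + 1 + 2 = j := by decide
lemma s3_cases : ∀ i j : ZMod 3, ¬ i = j → ¬ j = i + 1 → i = j + 1 := by decide

def skOp (p q : Option (ZMod (2*(k+1)) × ZMod 3)) : Option (ZMod (2*(k+1)) × ZMod 3) :=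
  match p, q with
  | none, none => none
  | none, some (x, j) => some (x + sK k, if x.val < k+1 then j - 1 else j + 1)
  | some (x, j), none => some (x + sK k, if x.val < k+1 then j - 1 else j + 1)
  | some (x, i), some (y, j) =>
    if i = j then (if x = y then some (x, i) else some (sh k (x + y), i + 1))
    else if j = i + 1 then
      (if sg k y = x + x then (if x.val < k+1 then some (x, i + 2) else none)
       else some (sg k y - x, i))
    else
      (if sg k x = y + y then (if y.val < k+1 then some (y, j + 2) else none)
       else some (sg k x - y, j))

lemma skOp_ns (x : ZMod (2*(k+1))) (j : ZMod 3) :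
    skOp k none (some (x, j)) =
      some (x + sK k, if x.val < k+1 then j - 1 else j + 1) := rfl

lemma skOp_sn (x : ZMod (2*(k+1))) (j : ZMod 3) :
    skOp k (some (x, j)) none =
      some (x + sK k, if x.val < k+1 then j - 1 else j + 1) := rfl

lemma skOp_ss (x y : ZMod (2*(k+1))) (i j : ZMod 3) :
    skOp k (some (x, i)) (some (y, j)) =
      if i = j then (if x = y then some (x, i) else some (sh k (x + y), i + 1))
      else if j = i + 1 then
        (if sg k y = x + x then (if x.val < k+1 then some (x, i + 2) else none)
         else some (sg k y - x, i))
      else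
        (if sg k x = y + y then (if y.val < k+1 then some (y, j + 2) else none)
         else some (sg k x - y, j)) := rfl

lemma sk_comm (p q : Option (ZMod (2*(k+1)) × ZMod 3)) : skOp k p q = skOp k q p := by
  match p, q with
  | none, none => rfl
  | none, some (x, j) => rfl
  | some (x, j), none => rfl
  | some (x, i), some (y, j) =>
    rw [skOp_ss, skOp_ss]
    by_cases hij : i = j
    · subst hij
      rw [if_pos rfl, if_pos rfl]
      by_cases hxy : x = y
      · subst hxy; rw [if_pos rfl]
      · rw [if_neg hxy, if_neg (Ne.symm hxy), add_comm x y]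
    · rw [if_neg hij, if_neg (Ne.symm hij)]
      by_cases hj : j = i + 1
      · have h4 : ¬ i = j + 1 := fun he => s3_ne_add_two i (by linear_combination he + hj)
        rw [if_pos hj, if_neg h4]
      · have h4 : i = j + 1 := s3_cases i j hij hj
        rw [if_neg hj, if_pos h4]

lemma sk_idem (p : Option (ZMod (2*(k+1)) × ZMod 3)) : skOp k p p = p := by
  match p with
  | none => rfl
  | some (x, i) => rw [skOp_ss, if_pos rfl, if_pos rfl]

lemma sk_key (p q : Option (ZMod (2*(k+1)) × ZMod 3)) : skOp k p (skOp k p q) = q := by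
  match p, q with
  | none, none => rfl
  | none, some (y, j) =>
    rw [skOp_ns]
    by_cases h : y.val < k+1
    · rw [if_pos h, skOp_ns]
      have hv : ¬ (y + sK k).val < k + 1 := by rw [sval_addK, if_pos h]; omega
      rw [if_neg hv]
      have h1 : y + sK k + sK k = y := by linear_combination sKK k
      have h2 : j - 1 + 1 = j := by ring
      rw [h1, h2]
    · rw [if_neg h, skOp_ns]
      have hv : (y + sK k).val < k + 1 := by rw [sval_addK, if_neg h]; have := ZMod.val_lt y; omega
      rw [if_pos hv]
      have h1 : y + sK k + sK k = y := by linear_combination sKK k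
      have h2 : j + 1 - 1 = j := by ring
      rw [h1, h2]
  | some (x, i), none =>
    rw [skOp_sn]
    by_cases hx : x.val < k+1
    · rw [if_pos hx, skOp_ss, if_neg (s3_ne_sub_one i), if_neg (s3_sub_ne_add i)]
      have hv : ¬ (x + sK k).val < k + 1 := by rw [sval_addK, if_pos hx]; omega
      have hcond : sg k x = (x + sK k) + (x + sK k) := by
        rw [sg_small k hx]; linear_combination -sKK k
      rw [if_pos hcond, if_neg hv]
    · rw [if_neg hx, skOp_ss, if_neg (s3_ne_add_one i), if_pos rfl]
      have hv : (x + sK k).val < k + 1 := by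
        rw [sval_addK, if_neg hx]; have := ZMod.val_lt x; omega
      have hcond : sg k (x + sK k) = x + x := by
        rw [sg_small k hv]; linear_combination sKK k
      rw [if_pos hcond, if_neg hx]
  | some (x, i), some (y, j) =>
    rw [skOp_ss]
    by_cases hij : i = j
    · subst hij
      rw [if_pos rfl]
      by_cases hxy : x = y
      · subst hxy
        rw [if_pos rfl]
        exact sk_idem k _
      · rw [if_neg hxy, skOp_ss, if_neg (s3_ne_add_one i), if_pos rfl, sg_h]
        have hcond : ¬ x + y = x + x := fun he => hxy (by linear_combination -he)
        rw [if_neg hcond]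
        have h1 : x + y - x = y := by ring
        rw [h1]
    · rw [if_neg hij]
      by_cases hj : j = i + 1
      · rw [if_pos hj]
        by_cases hgy : sg k y = x + x
        · rw [if_pos hgy]
          by_cases hx : x.val < k+1
          · rw [if_pos hx]
            have hyx : y = x := by
              have h5 := congrArg (sh k) hgy
              rw [sh_g, sh_diag, if_pos hx] at h5
              exact h5
            subst hyx
            rw [skOp_ss, if_neg (s3_ne_add_two i), if_neg (s3_add2_ne_add1 i)]
            have hcond : sg k y = y + y := by rw [sg_small k hx]; ring
            rw [if_pos hcond, if_pos hx, s3_add22, hj]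
          · rw [if_neg hx, skOp_sn, if_neg hx]
            have hyx : y = x + sK k := by
              have h5 := congrArg (sh k) hgy
              rw [sh_g, sh_diag, if_neg hx] at h5
              exact h5
            rw [hyx, hj]
        · rw [if_neg hgy, skOp_ss, if_pos rfl]
          have hne : ¬ x = sg k y - x := fun he => hgy (by linear_combination -he)
          rw [if_neg hne]
          have h1 : x + (sg k y - x) = sg k y := by ring
          rw [h1, sh_g, ← hj]
      · have h4 : i = j + 1 := s3_cases i j hij hj
        rw [if_neg hj]
        by_cases hgx : sg k x = y + y
        · rw [if_pos hgx]
          by_cases hy : y.val < k+1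
          · rw [if_pos hy]
            have hxy : x = y := by
              have h5 := congrArg (sh k) hgx
              rw [sh_g, sh_diag, if_pos hy] at h5
              exact h5
            subst hxy
            have h5 : j + 2 = i + 1 := by linear_combination -h4
            rw [h5, skOp_ss, if_neg (s3_ne_add_one i), if_pos rfl]
            have hcond : sg k x = x + x := by rw [sg_small k hy]; ring
            rw [if_pos hcond, if_pos hy]
            have h8 : i + 2 = j := by rw [h4]; exact s3_add12 j
            rw [h8]
          · rw [if_neg hy, skOp_sn]
            have hxy : x = y + sK k := by
              have h5 := congrArg (sh k) hgx
              rw [sh_g, sh_diag, if_neg hy] at h5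
              exact h5
            have hv : x.val < k + 1 := by
              rw [hxy, sval_addK, if_neg hy]; have := ZMod.val_lt y; omega
            rw [if_pos hv, hxy]
            have h6 : y + sK k + sK k = y := by linear_combination sKK k
            have h7 : i - 1 = j := by rw [h4]; ring
            rw [h6, h7]
        · rw [if_neg hgx, skOp_ss, if_neg hij, if_neg hj]
          have hne : ¬ sg k x = (sg k x - y) + (sg k x - y) := fun he =>
            hgx (by linear_combination -he)
          rw [if_neg hne]
          have h1 : sg k x - (sg k x - y) = y := by ring
          rw [h1]

end Skolem

/-! ### The constructions give decompositions -/

lemma bose_decomp (k : ℕ) :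
    3 * nuT (⊤ : SimpleGraph (Fin (6*k+3))) = numEdges (⊤ : SimpleGraph (Fin (6*k+3))) := by
  have hcard : Fintype.card (ZMod (2*k+1) × ZMod 3) = 6*k+3 := by
    rw [Fintype.card_prod, ZMod.card, ZMod.card]; ring
  exact quasigroup_decomposition_fin _ (Fintype.equivFinOfCardEq hcard)
    (boseOp k) (bose_comm k) (bose_idem k) (bose_key k)

lemma skolem_decomp (k : ℕ) :
    3 * nuT (⊤ : SimpleGraph (Fin (6*(k+1)+1)))
      = numEdges (⊤ : SimpleGraph (Fin (6*(k+1)+1))) := by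
  have hcard : Fintype.card (Option (ZMod (2*(k+1)) × ZMod 3)) = 6*(k+1)+1 := by
    rw [Fintype.card_option, Fintype.card_prod, ZMod.card, ZMod.card]; ring
  exact quasigroup_decomposition_fin _ (Fintype.equivFinOfCardEq hcard)
    (skOp k) (sk_comm k) (sk_idem k) (sk_key k)

lemma trivial_decomp :
    3 * nuT (⊤ : SimpleGraph (Fin (6*0+1))) = numEdges (⊤ : SimpleGraph (Fin (6*0+1))) := by
  have hcard : Fintype.card (Fin 1) = 6*0+1 := by simp
  exact quasigroup_decomposition_fin _ (Fintype.equivFinOfCardEq hcard)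
    (fun a _ => a) (fun a b => Subsingleton.elim _ _) (fun a => rfl)
    (fun a b => Subsingleton.elim _ _)

/-- K_n has an edge-disjoint triangle decomposition, i.e. ν_t(K_n) = |E(K_n)|/3,
iff n ≡ 1, 3 (mod 6). -/
theorem steiner_triple (n : ℕ) (hn : 1 ≤ n) :
    3 * nuT (⊤ : SimpleGraph (Fin n)) = numEdges (⊤ : SimpleGraph (Fin n)) ↔
      n % 6 = 1 ∨ n % 6 = 3 := by
  constructor
  · exact necessity n hn
  · rintro (h | h)
    · obtain ⟨m, rfl⟩ : ∃ m, n = 6*m+1 := ⟨n/6, by omega⟩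
      match m with
      | 0 => exact trivial_decomp
      | (k+1) => exact skolem_decomp k
    · obtain ⟨m, rfl⟩ : ∃ m, n = 6*m+3 := ⟨n/6, by omega⟩
      exact bose_decomp m
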